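/- arXiv:2604.02303 — 2 statements merged into one kernel-verified Lean document; each statement's English description precedes it below -/
import Mathlib

section
/- For any two Boolean networks f, g of dimension n, the following are equivalent: (1) f and g have the same collection of principal trapspaces, i.e. PT(f) = PT(g); (2) f and g have the same collection of trapspaces, i.e. Trapspaces(f) = Trapspaces(g); (3) T_f(x) = T_g(x) for all x ∈ 𝔹^n; (4) TG(f) = TG(g); (5) f^T = g^T. -/
/-!  Common definitions: Boolean networks on `Fin n → Bool`. -/

/-- The update `f^{(S)}` of the coordinates in `S` according to `f`. -/
def upd {n : ℕ} (f : (Fin n → Bool) → Fin n → Bool) (S : Finset (Fin n)) :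
    (Fin n → Bool) → Fin n → Bool :=
  fun x i => if i ∈ S then f x i else x i

/-- `f^{(S,T)} = f^{(T)} ∘ f^{(S)}`. -/
def upd2 {n : ℕ} (f : (Fin n → Bool) → Fin n → Bool) (S T : Finset (Fin n)) :
    (Fin n → Bool) → Fin n → Bool :=
  upd f T ∘ upd f S

/-- `Δ(x,y)`, the set of coordinates where `x` and `y` differ. -/
def delta {n : ℕ} (x y : Fin n → Bool) : Set (Fin n) := {i | x i ≠ y i}

/-- Hamming distance. -/
noncomputable def hdist {n : ℕ} (x y : Fin n → Bool) : ℕ := (delta x y).ncard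

/-- The interval (subcube) `[x,y]`. -/
def interval {n : ℕ} (x y : Fin n → Bool) : Set (Fin n → Bool) :=
  {z | delta x z ⊆ delta x y}

/-- A subcube of `𝔹^n`: fix the coordinates in `S` to `0` and those in `T` to `1`. -/
def IsSubcube {n : ℕ} (X : Set (Fin n → Bool)) : Prop :=
  ∃ S T : Set (Fin n), Disjoint S T ∧
    X = {x | (∀ i ∈ S, x i = false) ∧ (∀ i ∈ T, x i = true)}

/-- The partial order `f ⊑ g` on Boolean networks. -/
def BNle {n : ℕ} (f g : (Fin n → Bool) → Fin n → Bool) : Prop :=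
  ∀ x, delta x (f x) ⊆ delta x (g x)

/-- A trapspace of `f`: an invariant subcube. -/
def IsTrapspace {n : ℕ} (f : (Fin n → Bool) → Fin n → Bool)
    (X : Set (Fin n → Bool)) : Prop :=
  IsSubcube X ∧ ∀ x ∈ X, f x ∈ X

/-- The collection of all trapspaces of `f`. -/
def trapspaces {n : ℕ} (f : (Fin n → Bool) → Fin n → Bool) :
    Set (Set (Fin n → Bool)) :=
  {X | IsTrapspace f X}

/-- The principal trapspace `T_f(x)`: the smallest trapspace of `f` containing `x`. -/
def Tprin {n : ℕ} (f : (Fin n → Bool) → Fin n → Bool) (x : Fin n → Bool) :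
    Set (Fin n → Bool) :=
  ⋂₀ {X | IsTrapspace f X ∧ x ∈ X}

/-- The collection of principal trapspaces of `f`. -/
def PT {n : ℕ} (f : (Fin n → Bool) → Fin n → Bool) : Set (Set (Fin n → Bool)) :=
  {X | ∃ x, X = Tprin f x}

-- The opposite of `x` in a subcube `X` containing `x`: the coordinate `i` is flipped
-- iff some element of `X` differs from `x` there; so `[x, opp X x] = X` when `X` is a
-- subcube containing `x`.
open scoped Classical in
noncomputable def opp {n : ℕ} (X : Set (Fin n → Bool)) (x : Fin n → Bool) :
    Fin n → Bool :=
  fun i => if ∃ y ∈ X, y i ≠ x i then !(x i) else x i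

/-- The trapping closure `f^T`, characterised by `[x, f^T(x)] = T_f(x)`. -/
noncomputable def trapClosure {n : ℕ} (f : (Fin n → Bool) → Fin n → Bool) :
    (Fin n → Bool) → Fin n → Bool :=
  fun x => opp (Tprin f x) x

/-- The general asynchronous graph of `f`, as a relation on `𝔹^n`. -/
def GA {n : ℕ} (f : (Fin n → Bool) → Fin n → Bool) :
    (Fin n → Bool) → (Fin n → Bool) → Prop :=
  fun x y => ∃ S : Finset (Fin n), y = upd f S x

/-- The asynchronous graph of `f`, as a relation on `𝔹^n`. -/
def Agraph {n : ℕ} (f : (Fin n → Bool) → Fin n → Bool) :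
    (Fin n → Bool) → (Fin n → Bool) → Prop :=
  fun x y => ∃ i : Fin n, y = upd f {i} x

/-- The trapping graph of `f`: an edge `(x,y)` iff `y ∈ T_f(x)`. -/
def TG {n : ℕ} (f : (Fin n → Bool) → Fin n → Bool) :
    (Fin n → Bool) → (Fin n → Bool) → Prop :=
  fun x y => y ∈ Tprin f x

/-- A network is trapping if its general asynchronous graph is transitive. -/
def IsTrapping {n : ℕ} (f : (Fin n → Bool) → Fin n → Bool) : Prop :=
  Transitive (GA f)

/-- A commutative Boolean network: `f^{(i,j)} = f^{(j,i)}` for all `i,j`. -/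
def IsCommutative' {n : ℕ} (f : (Fin n → Bool) → Fin n → Bool) : Prop :=
  ∀ i j : Fin n, upd2 f {i} {j} = upd2 f {j} {i}

/-- `𝒜(x)`: the intersection of all members of `𝒜` containing `x`
(`= 𝔹^n` if no member contains `x`, since `⋂₀ ∅ = univ`). -/
def collAt {n : ℕ} (𝒜 : Set (Set (Fin n → Bool))) (x : Fin n → Bool) :
    Set (Fin n → Bool) :=
  ⋂₀ {A ∈ 𝒜 | x ∈ A}

/-- The network `F(𝒜)`, characterised by `[x, F(𝒜)(x)] = 𝒜(x)`. -/
noncomputable def Fnet {n : ℕ} (𝒜 : Set (Set (Fin n → Bool))) :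
    (Fin n → Bool) → Fin n → Bool :=
  fun x => opp (collAt 𝒜 x) x

/-- A collection of subcubes is pre-principal if `𝒬 = {𝒬(x) : x ∈ 𝔹^n}`. -/
def PrePrincipal {n : ℕ} (𝒬 : Set (Set (Fin n → Bool))) : Prop :=
  𝒬 = {X | ∃ x, X = collAt 𝒬 x}

/-- `λ(𝒜)`: unions of subcollections of `𝒜` that are subcubes. -/
def lamColl {n : ℕ} (𝒜 : Set (Set (Fin n → Bool))) : Set (Set (Fin n → Bool)) :=
  {X | ∃ ℛ ⊆ 𝒜, X = ⋃₀ ℛ ∧ IsSubcube X}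

/-- `μ(𝒜) = {𝒜(x) : x ∈ 𝔹^n}`. -/
def muColl {n : ℕ} (𝒜 : Set (Set (Fin n → Bool))) : Set (Set (Fin n → Bool)) :=
  {X | ∃ x, X = collAt 𝒜 x}

/-- A pre-ideal collection of subcubes. -/
def PreIdeal {n : ℕ} (𝒥 : Set (Set (Fin n → Bool))) : Prop :=
  Set.univ ∈ 𝒥 ∧
  (∀ A ∈ 𝒥, ∀ B ∈ 𝒥, (A ∩ B).Nonempty → A ∩ B ∈ 𝒥) ∧
  (∀ ℛ ⊆ 𝒥, IsSubcube (⋃₀ ℛ) → ⋃₀ ℛ ∈ 𝒥)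

/-- The collection of minimal trapspaces of `f`. -/
def MT {n : ℕ} (f : (Fin n → Bool) → Fin n → Bool) : Set (Set (Fin n → Bool)) :=
  {X | IsTrapspace f X ∧ ∀ Y, IsTrapspace f Y → ¬ Y ⊂ X}

/-- `M(f)`: the union of the minimal trapspaces of `f`. -/
def Mset {n : ℕ} (f : (Fin n → Bool) → Fin n → Bool) : Set (Fin n → Bool) :=
  ⋃₀ MT f

-- The min-trapping extension `f^M`: `[x, f^M(x)] = T_f(x)` if `x ∈ M(f)`,
-- and `f^M(x) = ¬x` otherwise.
open scoped Classical in
noncomputable def minExt {n : ℕ} (f : (Fin n → Bool) → Fin n → Bool) :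
    (Fin n → Bool) → Fin n → Bool :=
  fun x => if x ∈ Mset f then opp (Tprin f x) x else fun i => !(x i)

section Aux

variable {n : ℕ}

lemma rep_subcube (x : Fin n → Bool) (K : Set (Fin n)) :
    IsSubcube {z | delta x z ⊆ K} := by
  refine ⟨{i | i ∉ K ∧ x i = false}, {i | i ∉ K ∧ x i = true}, ?_, ?_⟩
  · rw [Set.disjoint_left]
    rintro i ⟨_, h1⟩ ⟨_, h2⟩
    simp [h1] at h2
  · ext z
    simp only [Set.mem_setOf_eq]
    constructor
    · intro hz
      constructor
      · rintro i ⟨hiK, hxi⟩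
        cases h : z i with
        | false => rfl
        | true => exact absurd (hz (show i ∈ delta x z by simp [delta, hxi, h])) hiK
      · rintro i ⟨hiK, hxi⟩
        cases h : z i with
        | true => rfl
        | false => exact absurd (hz (show i ∈ delta x z by simp [delta, hxi, h])) hiK
    · rintro ⟨h0, h1⟩ i hi
      by_contra hiK
      cases hx : x i with
      | false =>
        have := h0 i ⟨hiK, hx⟩
        exact hi (by rw [hx, this])
      | true =>
        have := h1 i ⟨hiK, hx⟩
        exact hi (by rw [hx, this])

lemma subcube_rep {X : Set (Fin n → Bool)} {x : Fin n → Bool}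
    (hX : IsSubcube X) (hx : x ∈ X) :
    ∃ K : Set (Fin n), X = {z | delta x z ⊆ K} := by
  obtain ⟨S, T, _, rfl⟩ := hX
  obtain ⟨hxS, hxT⟩ := hx
  refine ⟨(S ∪ T)ᶜ, ?_⟩
  ext z
  simp only [Set.mem_setOf_eq]
  constructor
  · rintro ⟨h0, h1⟩ i hi
    simp only [Set.mem_compl_iff, Set.mem_union]
    rintro (hiS | hiT)
    · exact hi (by rw [hxS i hiS, h0 i hiS])
    · exact hi (by rw [hxT i hiT, h1 i hiT])
  · intro hz
    constructor
    · intro i hiS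
      by_contra hne
      have hi : i ∈ delta x z := by
        simp only [delta, Set.mem_setOf_eq, hxS i hiS]
        exact fun h => hne h.symm
      exact (hz hi) (Or.inl hiS)
    · intro i hiT
      by_contra hne
      have hi : i ∈ delta x z := by
        simp only [delta, Set.mem_setOf_eq, hxT i hiT]
        exact fun h => hne h.symm
      exact (hz hi) (Or.inr hiT)

lemma mem_Tprin_self (f : (Fin n → Bool) → Fin n → Bool) (x : Fin n → Bool) :
    x ∈ Tprin f x :=
  Set.mem_sInter.2 fun _ hA => hA.2

lemma Tprin_subset {f : (Fin n → Bool) → Fin n → Bool} {x : Fin n → Bool}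
    {X : Set (Fin n → Bool)} (hX : IsTrapspace f X) (hx : x ∈ X) :
    Tprin f x ⊆ X :=
  Set.sInter_subset_of_mem ⟨hX, hx⟩

lemma Tprin_trapspace (f : (Fin n → Bool) → Fin n → Bool) (x : Fin n → Bool) :
    IsTrapspace f (Tprin f x) := by
  constructor
  · have h : ∀ A : {A : Set (Fin n → Bool) // IsTrapspace f A ∧ x ∈ A},
        ∃ K, (A : Set (Fin n → Bool)) = {z | delta x z ⊆ K} :=
      fun A => subcube_rep A.2.1.1 A.2.2
    choose K hK using h
    have hrep : Tprin f x = {z | delta x z ⊆ ⋂ A, K A} := by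
      ext z
      simp only [Tprin, Set.mem_sInter, Set.mem_setOf_eq, Set.subset_iInter_iff]
      constructor
      · intro h A
        have := h A.1 A.2
        rw [hK A] at this
        exact this
      · intro h A hA
        have h2 : z ∈ {z | delta x z ⊆ K ⟨A, hA⟩} := h ⟨A, hA⟩
        rw [← hK ⟨A, hA⟩] at h2
        exact h2
    rw [hrep]
    exact rep_subcube x _
  · intro y hy A hA
    exact hA.1.2 y (hy A hA)

lemma trapspace_iff {f : (Fin n → Bool) → Fin n → Bool} {X : Set (Fin n → Bool)} :
    IsTrapspace f X ↔ IsSubcube X ∧ ∀ x ∈ X, Tprin f x ⊆ X := by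
  constructor
  · exact fun h => ⟨h.1, fun x hx => Tprin_subset h hx⟩
  · rintro ⟨hs, h⟩
    exact ⟨hs, fun x hx => h x hx ((Tprin_trapspace f x).2 x (mem_Tprin_self f x))⟩

lemma opp_eq {X : Set (Fin n → Bool)} {x : Fin n → Bool}
    (hX : IsSubcube X) (hx : x ∈ X) :
    X = {z | delta x z ⊆ delta x (opp X x)} := by
  classical
  obtain ⟨K, hrep⟩ := subcube_rep hX hx
  have hD : delta x (opp X x) = K := by
    ext i
    constructor
    · intro hi
      by_cases hc : ∃ y ∈ X, y i ≠ x i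
      · obtain ⟨y, hy, hyi⟩ := hc
        have hmem : i ∈ delta x y := fun h => hyi h.symm
        rw [hrep] at hy
        exact hy hmem
      · have heq : opp X x i = x i := if_neg hc
        exact absurd heq.symm hi
    · intro hiK
      have hc : ∃ y ∈ X, y i ≠ x i := by
        refine ⟨Function.update x i (!x i), ?_, by simp⟩
        rw [hrep]
        intro j hj
        rcases eq_or_ne j i with rfl | hji
        · exact hiK
        · exfalso
          apply hj
          simp [delta, Function.update, hji] at hj ⊢
      have heq : opp X x i = !x i := if_pos hc
      show x i ≠ opp X x i
      rw [heq]
      cases x i <;> simp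
  rw [hD, ← hrep]

lemma Tprin_eq_interval (f : (Fin n → Bool) → Fin n → Bool) (x : Fin n → Bool) :
    Tprin f x = {z | delta x z ⊆ delta x (trapClosure f x)} :=
  opp_eq (Tprin_trapspace f x).1 (mem_Tprin_self f x)

lemma Tprin_eq_PT_inter (f : (Fin n → Bool) → Fin n → Bool) (x : Fin n → Bool) :
    Tprin f x = ⋂₀ {A | A ∈ PT f ∧ x ∈ A} := by
  apply subset_antisymm
  · intro z hz A hA
    obtain ⟨⟨y, rfl⟩, hxA⟩ := hA
    exact Tprin_subset (Tprin_trapspace f y) hxA hz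
  · exact Set.sInter_subset_of_mem ⟨⟨x, rfl⟩, mem_Tprin_self f x⟩

end Aux

/-- trapspace-equivalent networks. -/
theorem stmt3 (n : ℕ) (f g : (Fin n → Bool) → Fin n → Bool) :
    List.TFAE [
      PT f = PT g,
      trapspaces f = trapspaces g,
      ∀ x : Fin n → Bool, Tprin f x = Tprin g x,
      TG f = TG g,
      trapClosure f = trapClosure g
    ] := by
  tfae_have 3 → 1 := by
    intro h
    simp only [PT]
    ext X
    simp [h]
  tfae_have 1 → 3 := by
    intro h x
    rw [Tprin_eq_PT_inter f x, Tprin_eq_PT_inter g x, h]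
  tfae_have 3 → 2 := by
    intro h
    ext X
    simp only [trapspaces, Set.mem_setOf_eq, trapspace_iff, h]
  tfae_have 2 → 3 := by
    intro h x
    have : ∀ X : Set (Fin n → Bool), IsTrapspace f X ↔ IsTrapspace g X := by
      intro X
      constructor <;> intro hX
      · have : X ∈ trapspaces g := h ▸ hX
        exact this
      · have : X ∈ trapspaces f := h ▸ hX
        exact this
    simp only [Tprin, this]
  tfae_have 3 → 4 := by
    intro h
    funext x y
    simp [TG, h]
  tfae_have 4 → 3 := by
    intro h x
    ext y
    have := congrFun (congrFun h x) y
    simpa [TG] using this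
  tfae_have 3 → 5 := by
    intro h
    funext x
    simp [trapClosure, h]
  tfae_have 5 → 3 := by
    intro h x
    rw [Tprin_eq_interval f x, Tprin_eq_interval g x, h]
  tfae_finish
end

section
/- A collection of subcubes of 𝔹^n is the collection of trapspaces of some Boolean network of dimension n if and only if it is pre-ideal. Moreover, for every pre-ideal collection 𝒥 of subcubes of 𝔹^n, F(𝒥) is a trapping network with Trapspaces(F(𝒥)) = 𝒥, and for every trapping Boolean network g of dimension n, F(Trapspaces(g)) = g. -/
section Aux
variable {n : ℕ}

lemma bool_resolve {a b c : Bool} (h1 : a ≠ b) (h2 : a ≠ c) : b = c := by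
  cases a <;> cases b <;> cases c <;> simp_all

lemma mem_interval {x y z : Fin n → Bool} :
    z ∈ interval x y ↔ ∀ i, x i ≠ z i → x i ≠ y i := by
  constructor
  · intro h i hi; exact h hi
  · intro h i hi; exact h i hi

lemma mem_interval_self (x y : Fin n → Bool) : x ∈ interval x y := by
  rw [mem_interval]; intro i hi; exact absurd rfl hi

lemma mem_interval_right (x y : Fin n → Bool) : y ∈ interval x y := by
  rw [mem_interval]; intro i hi; exact hi

lemma mem_interval' {x y z : Fin n → Bool} :
    z ∈ interval x y ↔ ∀ i, x i = y i → z i = x i := by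
  rw [mem_interval]
  constructor
  · intro h i hi
    by_contra hz
    exact (h i (fun e => hz e.symm)) hi
  · intro h i hi hxy
    exact hi (h i hxy).symm

lemma interval_isSubcube (x y : Fin n → Bool) : IsSubcube (interval x y) := by
  refine ⟨{i | x i = false ∧ y i = false}, {i | x i = true ∧ y i = true}, ?_, ?_⟩
  · rw [Set.disjoint_left]; rintro i ⟨h1, _⟩ ⟨h2, _⟩; simp_all
  · ext z
    rw [mem_interval']
    constructor
    · intro h
      refine ⟨fun i hi => ?_, fun i hi => ?_⟩
      · rw [h i (hi.1.trans hi.2.symm), hi.1]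
      · rw [h i (hi.1.trans hi.2.symm), hi.1]
    · rintro ⟨h1, h2⟩ i hxy
      cases hx : x i
      · exact h1 i ⟨hx, hxy ▸ hx⟩
      · exact h2 i ⟨hx, hxy ▸ hx⟩

lemma interval_subset_subcube {X : Set (Fin n → Bool)} (hX : IsSubcube X)
    {x y : Fin n → Bool} (hx : x ∈ X) (hy : y ∈ X) : interval x y ⊆ X := by
  obtain ⟨S, T, hd, rfl⟩ := hX
  intro z hz
  rw [mem_interval'] at hz
  refine ⟨fun i hi => ?_, fun i hi => ?_⟩
  · rw [hz i ((hx.1 i hi).trans (hy.1 i hi).symm), hx.1 i hi]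
  · rw [hz i ((hx.2 i hi).trans (hy.2 i hi).symm), hx.2 i hi]

lemma opp_ne_iff {X : Set (Fin n → Bool)} {x : Fin n → Bool} (i : Fin n) :
    opp X x i ≠ x i ↔ ∃ y ∈ X, y i ≠ x i := by
  unfold opp
  split
  · next h => simpa using h
  · next h => simpa using h

lemma opp_interval (x y : Fin n → Bool) : opp (interval x y) x = y := by
  funext i
  unfold opp
  split
  · next h =>
    obtain ⟨z, hz, hzi⟩ := h
    rw [mem_interval] at hz
    have hxy : x i ≠ y i := hz i (fun e => hzi e.symm)
    cases hx : x i <;> cases hy : y i <;> simp_all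
  · next h =>
    push_neg at h
    exact (h y (mem_interval_right x y)).symm

lemma interval_opp {X : Set (Fin n → Bool)} (hX : IsSubcube X) {x : Fin n → Bool}
    (hx : x ∈ X) : interval x (opp X x) = X := by
  ext z
  rw [mem_interval]
  have key : ∀ i, (x i ≠ opp X x i) ↔ ∃ y ∈ X, y i ≠ x i := by
    intro i
    rw [ne_comm]
    exact opp_ne_iff i
  constructor
  · intro h
    obtain ⟨S, T, hd, rfl⟩ := hX
    refine ⟨fun i hi => ?_, fun i hi => ?_⟩
    · by_contra hz
      have hxz : x i ≠ z i := by rw [hx.1 i hi]; exact fun e => hz e.symm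
      obtain ⟨y, hy, hyi⟩ := (key i).mp (h i hxz)
      exact hyi ((hy.1 i hi).trans (hx.1 i hi).symm)
    · by_contra hz
      have hxz : x i ≠ z i := by rw [hx.2 i hi]; exact fun e => hz e.symm
      obtain ⟨y, hy, hyi⟩ := (key i).mp (h i hxz)
      exact hyi ((hy.2 i hi).trans (hx.2 i hi).symm)
  · intro hz i hxz
    rw [key]
    exact ⟨z, hz, fun e => hxz e.symm⟩

lemma GA_iff {f : (Fin n → Bool) → Fin n → Bool} {x y : Fin n → Bool} :
    GA f x y ↔ y ∈ interval x (f x) := by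
  constructor
  · rintro ⟨S, rfl⟩
    rw [mem_interval]
    intro i hi
    unfold upd at hi
    by_cases h : i ∈ S <;> simp_all
  · intro h
    rw [mem_interval] at h
    classical
    refine ⟨Finset.univ.filter (fun i => x i ≠ y i), ?_⟩
    funext i
    unfold upd
    by_cases hi : x i = y i
    · simp [hi]
    · have hf : x i ≠ f x i := h i hi
      have hmem : i ∈ Finset.univ.filter (fun i => x i ≠ y i) := by simp [hi]
      rw [if_pos hmem]
      exact bool_resolve hi hf

lemma trapspaces_preIdeal (f : (Fin n → Bool) → Fin n → Bool) :
    PreIdeal (trapspaces f) := by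
  refine ⟨⟨⟨∅, ∅, by simp, by ext z; simp⟩, fun _ _ => trivial⟩, ?_, ?_⟩
  · rintro A ⟨hA, hAf⟩ B ⟨hB, hBf⟩ ⟨w, hwA, hwB⟩
    obtain ⟨S1, T1, h1, rfl⟩ := hA
    obtain ⟨S2, T2, h2, rfl⟩ := hB
    refine ⟨⟨S1 ∪ S2, T1 ∪ T2, ?_, ?_⟩, fun x hx => ⟨hAf x hx.1, hBf x hx.2⟩⟩
    · rw [Set.disjoint_left]
      rintro i (hi | hi) (hj | hj)
      · exact absurd ((hwA.1 i hi).symm.trans (hwA.2 i hj)) (by simp)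
      · exact absurd ((hwA.1 i hi).symm.trans (hwB.2 i hj)) (by simp)
      · exact absurd ((hwB.1 i hi).symm.trans (hwA.2 i hj)) (by simp)
      · exact absurd ((hwB.1 i hi).symm.trans (hwB.2 i hj)) (by simp)
    · ext z
      simp only [Set.mem_inter_iff, Set.mem_setOf_eq, Set.mem_union]
      constructor
      · rintro ⟨⟨a1, a2⟩, ⟨b1, b2⟩⟩
        exact ⟨fun i hi => hi.elim (a1 i) (b1 i), fun i hi => hi.elim (a2 i) (b2 i)⟩
      · rintro ⟨c1, c2⟩
        exact ⟨⟨fun i hi => c1 i (Or.inl hi), fun i hi => c2 i (Or.inl hi)⟩,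
               ⟨fun i hi => c1 i (Or.inr hi), fun i hi => c2 i (Or.inr hi)⟩⟩
  · rintro ℛ hℛ hcube
    refine ⟨hcube, fun x hx => ?_⟩
    obtain ⟨R, hR, hxR⟩ := hx
    exact ⟨R, hR, (hℛ hR).2 x hxR⟩

lemma mem_collAt_self (𝒜 : Set (Set (Fin n → Bool))) (x : Fin n → Bool) :
    x ∈ collAt 𝒜 x := by
  intro A hA
  exact hA.2

lemma collAt_subset {𝒜 : Set (Set (Fin n → Bool))} {A : Set (Fin n → Bool)}
    (hA : A ∈ 𝒜) {x : Fin n → Bool} (hx : x ∈ A) : collAt 𝒜 x ⊆ A :=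
  Set.sInter_subset_of_mem ⟨hA, hx⟩

lemma collAt_mem {𝒥 : Set (Set (Fin n → Bool))} (h : PreIdeal 𝒥) (x : Fin n → Bool) :
    collAt 𝒥 x ∈ 𝒥 := by
  have key : ∀ 𝒮 : Set (Set (Fin n → Bool)), 𝒮.Finite →
      𝒮 ⊆ {A ∈ 𝒥 | x ∈ A} → ⋂₀ 𝒮 ∈ 𝒥 ∧ x ∈ ⋂₀ 𝒮 := by
    intro 𝒮 hfin
    refine Set.Finite.induction_on
      (motive := fun 𝒮 _ => 𝒮 ⊆ {A ∈ 𝒥 | x ∈ A} → ⋂₀ 𝒮 ∈ 𝒥 ∧ x ∈ ⋂₀ 𝒮) 𝒮 hfin ?_ ?_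
    · intro _
      rw [Set.sInter_empty]
      exact ⟨h.1, trivial⟩
    · intro A 𝒮' hA hS ih hsub
      rw [Set.sInter_insert]
      have h1 := ih (fun B hB => hsub (Set.mem_insert_of_mem _ hB))
      have h2 := hsub (Set.mem_insert _ _)
      exact ⟨h.2.1 _ h2.1 _ h1.1 ⟨x, h2.2, h1.2⟩, h2.2, h1.2⟩
  exact (key _ (Set.toFinite _) subset_rfl).1

lemma interval_Fnet {𝒥 : Set (Set (Fin n → Bool))} (h𝒥 : ∀ A ∈ 𝒥, IsSubcube A)
    (h : PreIdeal 𝒥) (x : Fin n → Bool) :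
    interval x (Fnet 𝒥 x) = collAt 𝒥 x :=
  interval_opp (h𝒥 _ (collAt_mem h x)) (mem_collAt_self 𝒥 x)

lemma trapping_interval {g : (Fin n → Bool) → Fin n → Bool} (hg : IsTrapping g)
    (x : Fin n → Bool) : interval x (g x) = collAt (trapspaces g) x := by
  have htrap : IsTrapspace g (interval x (g x)) := by
    refine ⟨interval_isSubcube _ _, fun y hy => ?_⟩
    have h1 : GA g x y := GA_iff.mpr hy
    have h2 : GA g y (g y) := GA_iff.mpr (mem_interval_right _ _)
    exact GA_iff.mp (hg h1 h2)
  apply subset_antisymm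
  · intro z hz A hA
    exact interval_subset_subcube hA.1.1 hA.2 (hA.1.2 x hA.2) hz
  · exact collAt_subset htrap (mem_interval_self _ _)

end Aux

/-- the collections of trapspaces are exactly the pre-ideal collections
of subcubes; `F` and `Trapspaces` are mutually inverse between pre-ideal collections
and trapping networks. -/
theorem stmt6 (n : ℕ) (𝒥 : Set (Set (Fin n → Bool))) (h𝒥 : ∀ A ∈ 𝒥, IsSubcube A) :
    ((∃ f : (Fin n → Bool) → Fin n → Bool, trapspaces f = 𝒥) ↔ PreIdeal 𝒥) ∧
    (PreIdeal 𝒥 → IsTrapping (Fnet 𝒥) ∧ trapspaces (Fnet 𝒥) = 𝒥) ∧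
    (∀ g : (Fin n → Bool) → Fin n → Bool, IsTrapping g → Fnet (trapspaces g) = g) := by
  have part2 : PreIdeal 𝒥 → IsTrapping (Fnet 𝒥) ∧ trapspaces (Fnet 𝒥) = 𝒥 := by
    intro h
    have hGA : ∀ x y, GA (Fnet 𝒥) x y ↔ y ∈ collAt 𝒥 x := by
      intro x y
      rw [GA_iff, interval_Fnet h𝒥 h]
    constructor
    · intro x y z hxy hyz
      rw [hGA] at hxy hyz ⊢
      exact collAt_subset (collAt_mem h x) hxy hyz
    · ext X
      constructor
      · rintro ⟨hXcube, hXinv⟩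
        have hXeq : X = ⋃₀ {C | ∃ x ∈ X, C = collAt 𝒥 x} := by
          apply subset_antisymm
          · intro z hz
            exact ⟨collAt 𝒥 z, ⟨z, hz, rfl⟩, mem_collAt_self 𝒥 z⟩
          · rintro z ⟨C, ⟨x, hx, rfl⟩, hzC⟩
            have : collAt 𝒥 x ⊆ X := by
              rw [← interval_Fnet h𝒥 h]
              exact interval_subset_subcube hXcube hx (hXinv x hx)
            exact this hzC
        rw [hXeq]
        apply h.2.2
        · rintro C ⟨x, hx, rfl⟩
          exact collAt_mem h x
        · rw [← hXeq]; exact hXcube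
      · intro hX
        refine ⟨h𝒥 X hX, fun x hx => ?_⟩
        have hmem : Fnet 𝒥 x ∈ collAt 𝒥 x := by
          rw [← interval_Fnet h𝒥 h]
          exact mem_interval_right _ _
        exact collAt_subset hX hx hmem
  refine ⟨⟨?_, fun h => ⟨Fnet 𝒥, (part2 h).2⟩⟩, part2, ?_⟩
  · rintro ⟨f, rfl⟩
    exact trapspaces_preIdeal f
  · intro g hg
    funext x
    show opp (collAt (trapspaces g) x) x = g x
    rw [← trapping_interval hg x, opp_interval]
end
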